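/- (Bellman difference bound) For γ < 0 and f, g ∈ C_ω(ℝ^k), x, y ∈ ℝ^k, β > 0: T_γf(x) − T_γg(x) − (T_γf(y) − T_γg(y)) ≤ ∫ (f(z)−g(z)) H^{f,g}_{x,y}(dz) ≤ ‖f−g‖_{β,ω-span} · ‖H^{f,g}_{x,y}‖_{β,ω-var}, where H^{f,g}_{x,y} is the difference of two Esscher-transformed transition measures. -/

import Mathlib

open MeasureTheory ProbabilityTheory Real Set
open scoped NNReal ENNReal

/-- The Bellman operator T_γ f(x) = inf_{h ∈ U} log E[exp(γF(x,h,W₀) + f(G(x,W₀)))]. -/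
noncomputable def bellmanT {Ω : Type*} [MeasureSpace Ω] {k m d : ℕ}
    (γ : ℝ) (U : Set (Fin m → ℝ)) (W₀ : Ω → Fin d → ℝ)
    (G : (Fin k → ℝ) → (Fin d → ℝ) → Fin k → ℝ)
    (F : (Fin k → ℝ) → (Fin m → ℝ) → (Fin d → ℝ) → ℝ)
    (f : (Fin k → ℝ) → ℝ) (x : Fin k → ℝ) : ℝ :=
  sInf ((fun h => Real.log
    (∫ ω', Real.exp (γ * F x h (W₀ ω') + f (G x (W₀ ω'))))) '' U)

/-- β-weighted ω-span seminorm. -/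
noncomputable def wspanb {k : ℕ} (β : ℝ) (ω f : (Fin k → ℝ) → ℝ) : ℝ :=
  ⨆ p : (Fin k → ℝ) × (Fin k → ℝ),
    (f p.1 - f p.2) / (2 + β * ω p.1 + β * ω p.2)

section Aux

set_option linter.unusedSectionVars false
set_option linter.unusedVariables false

variable {Ω E : Type*} [MeasureSpace Ω] [IsProbabilityMeasure (ℙ : Measure Ω)]
  [MeasurableSpace E]

lemma aux_jensen_exp {α : Type*} [MeasurableSpace α] (μ : Measure α) [IsProbabilityMeasure μ]
    (ψ : α → ℝ) (h1 : Integrable ψ μ) (h2 : Integrable (fun a => Real.exp (ψ a)) μ) :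
    ∫ a, ψ a ∂μ ≤ Real.log (∫ a, Real.exp (ψ a) ∂μ) := by
  have h3 : Real.exp (∫ a, ψ a ∂μ) ≤ ∫ a, Real.exp (ψ a) ∂μ :=
    convexOn_exp.map_integral_le continuous_exp.continuousOn isClosed_univ
      (Filter.Eventually.of_forall fun x => mem_univ _) h1 h2
  calc ∫ a, ψ a ∂μ = Real.log (Real.exp (∫ a, ψ a ∂μ)) := (Real.log_exp _).symm
    _ ≤ _ := Real.log_le_log (Real.exp_pos _) h3

lemma aux_rep (T : Ω → E) (hT : Measurable T) (ψ : Ω → ℝ) (hψ : Measurable ψ)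
    (Q : Measure E) [IsFiniteMeasure Q]
    (hQ : ∀ A : Set E, MeasurableSet A → (Q A).toReal =
      (∫ ω', A.indicator (fun _ => Real.exp (ψ ω')) (T ω')) / ∫ ω', Real.exp (ψ ω')) :
    Q = Measure.map T (Measure.tilted ℙ ψ) := by
  refine Measure.ext fun A hA => ?_
  rw [Measure.map_apply hT hA, tilted_apply_eq_ofReal_integral' ψ (hT hA)]
  conv_lhs => rw [← ENNReal.ofReal_toReal (measure_ne_top Q A), hQ A hA]
  have hnum : (∫ ω', A.indicator (fun _ => Real.exp (ψ ω')) (T ω'))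
      = ∫ ω', (T ⁻¹' A).indicator (fun ω'' => Real.exp (ψ ω'')) ω' :=
    integral_congr_ae (Filter.Eventually.of_forall fun ω' => by
      by_cases h : T ω' ∈ A <;> simp [Set.indicator_apply, h, Set.mem_preimage])
  rw [hnum, integral_indicator (hT hA), ← integral_div]

lemma aux_exp_integral (T : Ω → E) (hT : Measurable T) (ψ : Ω → ℝ) (hψ : Measurable ψ)
    (χ : E → ℝ) (hχ : Measurable χ) :
    ∫ z, Real.exp (χ z) ∂(Measure.map T (Measure.tilted ℙ ψ))
      = (∫ ω', Real.exp (ψ ω' + χ (T ω'))) / ∫ ω', Real.exp (ψ ω') := by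
  rw [integral_map (f := fun z => Real.exp (χ z)) hT.aemeasurable
    (Real.measurable_exp.comp hχ).aestronglyMeasurable]
  have h := integral_exp_tilted (μ := ℙ) ψ (fun ω' => χ (T ω'))
  simpa using h

lemma aux_exp_integrable (T : Ω → E) (hT : Measurable T) (ψ : Ω → ℝ) (hψ : Measurable ψ)
    (hint : Integrable (fun ω' => Real.exp (ψ ω')) ℙ)
    (χ : E → ℝ) (hχ : Measurable χ)
    (hprod : Integrable (fun ω' => Real.exp (ψ ω' + χ (T ω'))) ℙ) :
    Integrable (fun z => Real.exp (χ z)) (Measure.map T (Measure.tilted ℙ ψ)) := by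
  have hZ : 0 < ∫ ω', Real.exp (ψ ω') := integral_exp_pos hint
  rw [integrable_map_measure (g := fun z => Real.exp (χ z))
    (Real.measurable_exp.comp hχ).aestronglyMeasurable hT.aemeasurable,
    tilted_eq_withDensity_nnreal]
  refine (integrable_withDensity_iff_integrable_smul
      (f := fun x => (⟨Real.exp (ψ x) / ∫ x, Real.exp (ψ x) ∂ℙ, by positivity⟩ : ℝ≥0))
      (by exact Measurable.subtype_mk ((Real.measurable_exp.comp hψ).div_const _))).2 ?_
  refine (hprod.div_const (∫ ω', Real.exp (ψ ω'))).congr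
    (Filter.Eventually.of_forall fun ω' => ?_)
  show Real.exp (ψ ω' + χ (T ω')) / _ = _ • _
  show _ = (Real.exp (ψ ω') / ∫ x, Real.exp (ψ x) ∂ℙ) • ((fun z => Real.exp (χ z)) ∘ T) ω'
  rw [Real.exp_add]
  simp only [Function.comp_apply, smul_eq_mul]
  ring

lemma aux_bddBelow {ι : Type*} (U : Set ι) (r : ι → Ω → ℝ) (ℓ : Ω → ℝ)
    (hℓm : AEStronglyMeasurable (fun ω' => Real.exp (ℓ ω')) ℙ)
    (hb : ∀ h ∈ U, ∀ ω', ℓ ω' ≤ r h ω') (hℓub : ∀ ω', ℓ ω' ≤ 0)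
    (hint : ∀ h ∈ U, Integrable (fun ω' => Real.exp (r h ω')) ℙ) :
    BddBelow ((fun h => Real.log (∫ ω', Real.exp (r h ω'))) '' U) := by
  have hℓint : Integrable (fun ω' => Real.exp (ℓ ω')) ℙ := by
    refine (integrable_const (1:ℝ)).mono hℓm (Filter.Eventually.of_forall fun ω' => ?_)
    rw [Real.norm_eq_abs, Real.norm_eq_abs, abs_of_nonneg (Real.exp_pos _).le]
    simpa using Real.exp_le_one_iff.2 (hℓub ω')
  refine ⟨Real.log (∫ ω', Real.exp (ℓ ω')), ?_⟩
  rintro v ⟨h, hh, rfl⟩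
  exact Real.log_le_log (integral_exp_pos hℓint)
    (integral_mono hℓint (hint h hh) fun ω' => Real.exp_le_exp.2 (hb h hh ω'))

lemma aux_part2 (Q₁ Q₂ : Measure E)
    [IsProbabilityMeasure Q₁] [IsProbabilityMeasure Q₂]
    (φ ρ : E → ℝ) (hφm : StronglyMeasurable φ)
    (s c : ℝ)
    (habs : ∀ z, |φ z - c| ≤ s * ρ z)
    (hI₁ : Integrable φ Q₁) (hI₂ : Integrable φ Q₂)
    (hIvar : Integrable ρ ((Q₁.toSignedMeasure - Q₂.toSignedMeasure).totalVariation)) :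
    (∫ z, φ z ∂Q₁) - (∫ z, φ z ∂Q₂) ≤
      s * ∫ z, ρ z ∂((Q₁.toSignedMeasure - Q₂.toSignedMeasure).totalVariation) := by
  set μs := Q₁.toSignedMeasure - Q₂.toSignedMeasure with hμs
  set p := μs.toJordanDecomposition.posPart with hpdef
  set n := μs.toJordanDecomposition.negPart with hndef
  have htv : μs.totalVariation = p + n := rfl
  rw [htv] at hIvar ⊢
  obtain ⟨hρp, hρn⟩ := integrable_add_measure.1 hIvar
  set ψ : E → ℝ := fun z => φ z - c with hψdef
  have hψm : StronglyMeasurable ψ := hφm.sub stronglyMeasurable_const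
  have hψp : Integrable ψ p := by
    refine (hρp.const_mul s).mono hψm.aestronglyMeasurable
      (Filter.Eventually.of_forall fun z => ?_)
    rw [Real.norm_eq_abs, Real.norm_eq_abs]
    exact (habs z).trans (le_abs_self _)
  have hψn : Integrable ψ n := by
    refine (hρn.const_mul s).mono hψm.aestronglyMeasurable
      (Filter.Eventually.of_forall fun z => ?_)
    rw [Real.norm_eq_abs, Real.norm_eq_abs]
    exact (habs z).trans (le_abs_self _)
  have hψQ₁ : Integrable ψ Q₁ := hI₁.sub (integrable_const c)
  have hψQ₂ : Integrable ψ Q₂ := hI₂.sub (integrable_const c)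
  have hmeq : Q₁ + n = Q₂ + p := by
    refine Measure.ext fun A hA => ?_
    have h0 := congrArg (fun v : SignedMeasure E => v A)
      (SignedMeasure.toSignedMeasure_toJordanDecomposition μs)
    simp only [JordanDecomposition.toSignedMeasure, VectorMeasure.sub_apply,
      Measure.toSignedMeasure_apply_measurable hA, hμs] at h0
    rw [Measure.add_apply, Measure.add_apply,
      ← ENNReal.ofReal_toReal (a := Q₁ A + n A)
        (ENNReal.add_ne_top.2 ⟨measure_ne_top _ _, measure_ne_top _ _⟩),
      ← ENNReal.ofReal_toReal (a := Q₂ A + p A)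
        (ENNReal.add_ne_top.2 ⟨measure_ne_top _ _, measure_ne_top _ _⟩)]
    congr 1
    rw [ENNReal.toReal_add (measure_ne_top _ _) (measure_ne_top _ _),
      ENNReal.toReal_add (measure_ne_top _ _) (measure_ne_top _ _)]
    simp only [measureReal_def] at h0
    linarith
  have hkey : (∫ z, ψ z ∂Q₁) + ∫ z, ψ z ∂n = (∫ z, ψ z ∂Q₂) + ∫ z, ψ z ∂p := by
    rw [← integral_add_measure hψQ₁ hψn, ← integral_add_measure hψQ₂ hψp, hmeq]
  have hb1 : ∫ z, ψ z ∂p ≤ ∫ z, s * ρ z ∂p :=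
    integral_mono hψp (hρp.const_mul s) fun z => (le_abs_self _).trans (habs z)
  have hb2 : - ∫ z, ψ z ∂n ≤ ∫ z, s * ρ z ∂n := by
    rw [← integral_neg]
    exact integral_mono hψn.neg (hρn.const_mul s) fun z => (neg_le_abs _).trans (habs z)
  have hsum : (∫ z, s * ρ z ∂p) + ∫ z, s * ρ z ∂n = s * ∫ z, ρ z ∂(p + n) := by
    rw [integral_add_measure hρp hρn, integral_const_mul, integral_const_mul]
    ring
  have hcQ₁ : ∫ z, ψ z ∂Q₁ = (∫ z, φ z ∂Q₁) - c := by
    rw [hψdef, integral_sub hI₁ (integrable_const c), integral_const]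
    simp
  have hcQ₂ : ∫ z, ψ z ∂Q₂ = (∫ z, φ z ∂Q₂) - c := by
    rw [hψdef, integral_sub hI₂ (integrable_const c), integral_const]
    simp
  linarith

end Aux

set_option maxHeartbeats 3000000 in
theorem stmt15 {Ω : Type*} [MeasureSpace Ω] [IsProbabilityMeasure (ℙ : Measure Ω)]
    (k m d : ℕ) (γ : ℝ) (hγ : γ < 0)
    (U : Set (Fin m → ℝ)) (hU : IsCompact U) (hUne : U.Nonempty)
    (W₀ : Ω → Fin d → ℝ) (hW₀ : Measurable W₀)
    (G : (Fin k → ℝ) → (Fin d → ℝ) → Fin k → ℝ)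
    (hGmeas : Measurable (Function.uncurry G))
    (hGcont : ∀ w, Continuous fun x => G x w)
    (F : (Fin k → ℝ) → (Fin m → ℝ) → (Fin d → ℝ) → ℝ)
    (hFmeas : Measurable fun p : ((Fin k → ℝ) × (Fin m → ℝ)) × (Fin d → ℝ) =>
      F p.1.1 p.1.2 p.2)
    (hFcont : ∀ w, Continuous fun p : (Fin k → ℝ) × (Fin m → ℝ) => F p.1 p.2 w)
    (ω : (Fin k → ℝ) → ℝ) (hωc : Continuous ω) (hω0 : ∀ x, 0 ≤ ω x)
    (a₁ a₂ : (Fin d → ℝ) → ℝ) (ha₁ : ∀ w, 0 ≤ a₁ w) (ha₂ : ∀ w, 0 ≤ a₂ w)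
    (b₁ b₂ : ℝ) (hb₁ : 0 < b₁) (hb₁' : b₁ < 1) (hb₂ : 0 < b₂)
    (hGd : ∀ x w, ω (G x w) ≤ a₁ w + b₁ * ω x)
    (hFd : ∀ x h w, |F x h w| ≤ a₂ w + b₂ * ω x)
    (hmom : ∀ c : ℝ,
      Integrable (fun ω' => Real.exp (c * a₁ (W₀ ω'))) ∧
        Integrable (fun ω' => Real.exp (c * a₂ (W₀ ω'))))
    (f g : (Fin k → ℝ) → ℝ) (hfc : Continuous f) (hgc : Continuous g)
    (hfb : BddAbove (Set.range fun x => |f x| / (1 + ω x)))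
    (hgb : BddAbove (Set.range fun x => |g x| / (1 + ω x)))
    (x y : Fin k → ℝ) (β : ℝ) (hβ : 0 < β)
    -- h_{(x,g)} and h_{(y,f)}: minimizers in the Bellman operator
    (hxg hyf : Fin m → ℝ) (hxgU : hxg ∈ U) (hyfU : hyf ∈ U)
    (hmin1 : Real.log (∫ ω', Real.exp (γ * F x hxg (W₀ ω') + g (G x (W₀ ω')))) =
      bellmanT γ U W₀ G F g x)
    (hmin2 : Real.log (∫ ω', Real.exp (γ * F y hyf (W₀ ω') + f (G y (W₀ ω')))) =
      bellmanT γ U W₀ G F f y)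
    -- the Esscher-transformed transition measures Q̄_{(x,f,h_{(x,g)})}, Q̄_{(y,g,h_{(y,f)})}
    (Q₁ Q₂ : Measure (Fin k → ℝ))
    [IsProbabilityMeasure Q₁] [IsProbabilityMeasure Q₂]
    (hQ₁ : ∀ A : Set (Fin k → ℝ), MeasurableSet A → (Q₁ A).toReal =
      (∫ ω', A.indicator
          (fun _ => Real.exp (γ * F x hxg (W₀ ω') + f (G x (W₀ ω')))) (G x (W₀ ω'))) /
        ∫ ω', Real.exp (γ * F x hxg (W₀ ω') + f (G x (W₀ ω'))))
    (hQ₂ : ∀ A : Set (Fin k → ℝ), MeasurableSet A → (Q₂ A).toReal =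
      (∫ ω', A.indicator
          (fun _ => Real.exp (γ * F y hyf (W₀ ω') + g (G y (W₀ ω')))) (G y (W₀ ω'))) /
        ∫ ω', Real.exp (γ * F y hyf (W₀ ω') + g (G y (W₀ ω'))))
    (hI₁ : Integrable (fun z => f z - g z) Q₁)
    (hI₂ : Integrable (fun z => f z - g z) Q₂)
    (hIvar : Integrable (fun z => 1 + β * ω z)
      ((Q₁.toSignedMeasure - Q₂.toSignedMeasure).totalVariation)) :
    bellmanT γ U W₀ G F f x - bellmanT γ U W₀ G F g x -
        (bellmanT γ U W₀ G F f y - bellmanT γ U W₀ G F g y) ≤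
      (∫ z, (f z - g z) ∂Q₁) - ∫ z, (f z - g z) ∂Q₂ ∧
    (∫ z, (f z - g z) ∂Q₁) - (∫ z, (f z - g z) ∂Q₂) ≤
      wspanb β ω (fun z => f z - g z) *
        ∫ z, (1 + β * ω z) ∂((Q₁.toSignedMeasure - Q₂.toSignedMeasure).totalVariation) := by
  -- growth constants
  obtain ⟨Cf, hCfub⟩ := hfb
  obtain ⟨Cg, hCgub⟩ := hgb
  have hωpos : ∀ z, (0:ℝ) < 1 + ω z := fun z => by linarith [hω0 z]
  have hCf : ∀ z, |f z| ≤ Cf * (1 + ω z) := fun z => by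
    have h := hCfub ⟨z, rfl⟩
    rw [div_le_iff₀ (hωpos z)] at h
    linarith
  have hCg : ∀ z, |g z| ≤ Cg * (1 + ω z) := fun z => by
    have h := hCgub ⟨z, rfl⟩
    rw [div_le_iff₀ (hωpos z)] at h
    linarith
  have hCf0 : 0 ≤ Cf := le_trans (div_nonneg (abs_nonneg (f x)) (hωpos x).le) (hCfub ⟨x, rfl⟩)
  have hCg0 : 0 ≤ Cg := le_trans (div_nonneg (abs_nonneg (g x)) (hωpos x).le) (hCgub ⟨x, rfl⟩)
  -- measurability
  have hFm : ∀ (x' : Fin k → ℝ) (h' : Fin m → ℝ), Measurable fun ω' => F x' h' (W₀ ω') :=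
    fun x' h' => (hFmeas.comp (measurable_prodMk_left (x := (x', h')))).comp hW₀
  have hTm : ∀ x' : Fin k → ℝ, Measurable fun ω' => G x' (W₀ ω') :=
    fun x' => (hGmeas.comp (measurable_prodMk_left (x := x'))).comp hW₀
  have hψm : ∀ (x' : Fin k → ℝ) (h' : Fin m → ℝ) (φ : (Fin k → ℝ) → ℝ), Continuous φ →
      Measurable fun ω' => γ * F x' h' (W₀ ω') + φ (G x' (W₀ ω')) :=
    fun x' h' φ hφ => ((hFm x' h').const_mul γ).add (hφ.measurable.comp (hTm x'))
  -- integrability of the exponential moments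
  have keyInt : ∀ (x' : Fin k → ℝ) (h' : Fin m → ℝ) (φ : (Fin k → ℝ) → ℝ) (hφc : Continuous φ)
      (Cφ : ℝ), 0 ≤ Cφ → (∀ z, |φ z| ≤ Cφ * (1 + ω z)) →
      Integrable (fun ω' => Real.exp (γ * F x' h' (W₀ ω') + φ (G x' (W₀ ω')))) ℙ := by
    intro x' h' φ hφc Cφ hCφ hφb
    have hu : Integrable (fun ω' =>
        Real.exp (2 * |γ| * a₂ (W₀ ω')) * Real.exp (2 * (|γ| * (b₂ * ω x')))) ℙ :=
      (hmom (2 * |γ|)).2.mul_const _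
    have hv : Integrable (fun ω' =>
        Real.exp (2 * Cφ * a₁ (W₀ ω')) * Real.exp (2 * (Cφ * (1 + b₁ * ω x')))) ℙ :=
      (hmom (2 * Cφ)).1.mul_const _
    refine ((hu.add hv).div_const 2).mono
      (Real.measurable_exp.comp (hψm x' h' φ hφc)).aestronglyMeasurable
      (Filter.Eventually.of_forall fun ω' => ?_)
    have hF1 : γ * F x' h' (W₀ ω') ≤ |γ| * a₂ (W₀ ω') + |γ| * (b₂ * ω x') := by
      have h1 : γ * F x' h' (W₀ ω') ≤ |γ| * |F x' h' (W₀ ω')| := by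
        rw [← abs_mul]; exact le_abs_self _
      have h2 : |γ| * |F x' h' (W₀ ω')| ≤ |γ| * (a₂ (W₀ ω') + b₂ * ω x') :=
        mul_le_mul_of_nonneg_left (hFd x' h' (W₀ ω')) (abs_nonneg γ)
      nlinarith
    have hF2 : φ (G x' (W₀ ω')) ≤ Cφ * a₁ (W₀ ω') + Cφ * (1 + b₁ * ω x') := by
      have h1 : φ (G x' (W₀ ω')) ≤ Cφ * (1 + ω (G x' (W₀ ω'))) :=
        le_trans (le_abs_self _) (hφb _)
      have h2 : Cφ * (1 + ω (G x' (W₀ ω'))) ≤ Cφ * (1 + (a₁ (W₀ ω') + b₁ * ω x')) :=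
        mul_le_mul_of_nonneg_left (by linarith [hGd x' (W₀ ω')]) hCφ
      nlinarith
    have hpos : (0:ℝ) ≤ (Real.exp (2 * |γ| * a₂ (W₀ ω')) * Real.exp (2 * (|γ| * (b₂ * ω x')))
        + Real.exp (2 * Cφ * a₁ (W₀ ω')) * Real.exp (2 * (Cφ * (1 + b₁ * ω x')))) / 2 := by
      positivity
    simp only [Real.norm_eq_abs, Pi.add_apply]
    rw [abs_of_nonneg (Real.exp_pos _).le, abs_of_nonneg hpos]
    have e1 : Real.exp (2 * |γ| * a₂ (W₀ ω')) * Real.exp (2 * (|γ| * (b₂ * ω x')))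
        = Real.exp (|γ| * a₂ (W₀ ω') + |γ| * (b₂ * ω x'))
          * Real.exp (|γ| * a₂ (W₀ ω') + |γ| * (b₂ * ω x')) := by
      rw [← Real.exp_add, ← Real.exp_add]; congr 1; ring
    have e2 : Real.exp (2 * Cφ * a₁ (W₀ ω')) * Real.exp (2 * (Cφ * (1 + b₁ * ω x')))
        = Real.exp (Cφ * a₁ (W₀ ω') + Cφ * (1 + b₁ * ω x'))
          * Real.exp (Cφ * a₁ (W₀ ω') + Cφ * (1 + b₁ * ω x')) := by
      rw [← Real.exp_add, ← Real.exp_add]; congr 1; ring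
    have e3 : Real.exp (γ * F x' h' (W₀ ω') + φ (G x' (W₀ ω')))
        ≤ Real.exp (|γ| * a₂ (W₀ ω') + |γ| * (b₂ * ω x'))
          * Real.exp (Cφ * a₁ (W₀ ω') + Cφ * (1 + b₁ * ω x')) := by
      rw [← Real.exp_add]; exact Real.exp_le_exp.2 (by linarith)
    rw [e1, e2]
    nlinarith [sq_nonneg (Real.exp (|γ| * a₂ (W₀ ω') + |γ| * (b₂ * ω x'))
      - Real.exp (Cφ * a₁ (W₀ ω') + Cφ * (1 + b₁ * ω x')))]
  have hIfx := keyInt x hxg f hfc Cf hCf0 hCf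
  have hIgx := keyInt x hxg g hgc Cg hCg0 hCg
  have hIfy := keyInt y hyf f hfc Cf hCf0 hCf
  have hIgy := keyInt y hyf g hgc Cg hCg0 hCg
  have hZfx := integral_exp_pos hIfx
  have hZgx := integral_exp_pos hIgx
  have hZfy := integral_exp_pos hIfy
  have hZgy := integral_exp_pos hIgy
  -- representation of Q₁ and Q₂ as pushforwards of tilted measures
  have hrep₁ : Q₁ = Measure.map (fun ω' => G x (W₀ ω'))
      (Measure.tilted ℙ fun ω' => γ * F x hxg (W₀ ω') + f (G x (W₀ ω'))) :=
    aux_rep _ (hTm x) _ (hψm x hxg f hfc) Q₁ hQ₁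
  have hrep₂ : Q₂ = Measure.map (fun ω' => G y (W₀ ω'))
      (Measure.tilted ℙ fun ω' => γ * F y hyf (W₀ ω') + g (G y (W₀ ω'))) :=
    aux_rep _ (hTm y) _ (hψm y hyf g hgc) Q₂ hQ₂
  -- exponential integrals under Q₁, Q₂
  have hnum₁ : (fun ω' => Real.exp (γ * F x hxg (W₀ ω') + f (G x (W₀ ω'))
        + (g (G x (W₀ ω')) - f (G x (W₀ ω')))))
      = fun ω' => Real.exp (γ * F x hxg (W₀ ω') + g (G x (W₀ ω'))) := by
    funext ω'
    congr 1
    ring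
  have hnum₂ : (fun ω' => Real.exp (γ * F y hyf (W₀ ω') + g (G y (W₀ ω'))
        + (f (G y (W₀ ω')) - g (G y (W₀ ω')))))
      = fun ω' => Real.exp (γ * F y hyf (W₀ ω') + f (G y (W₀ ω'))) := by
    funext ω'
    congr 1
    ring
  have hE₁ : ∫ z, Real.exp (g z - f z) ∂Q₁
      = (∫ ω', Real.exp (γ * F x hxg (W₀ ω') + g (G x (W₀ ω'))))
        / ∫ ω', Real.exp (γ * F x hxg (W₀ ω') + f (G x (W₀ ω'))) := by
    have h' : ∫ z, Real.exp (g z - f z) ∂(Measure.map (fun ω' => G x (W₀ ω'))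
          (Measure.tilted ℙ fun ω' => γ * F x hxg (W₀ ω') + f (G x (W₀ ω'))))
        = (∫ ω', Real.exp (γ * F x hxg (W₀ ω') + f (G x (W₀ ω'))
            + (g (G x (W₀ ω')) - f (G x (W₀ ω')))))
          / ∫ ω', Real.exp (γ * F x hxg (W₀ ω') + f (G x (W₀ ω'))) :=
      aux_exp_integral _ (hTm x) _ (hψm x hxg f hfc) (fun z => g z - f z)
        (hgc.sub hfc).measurable
    rw [hrep₁, h', hnum₁]
  have hE₂ : ∫ z, Real.exp (f z - g z) ∂Q₂
      = (∫ ω', Real.exp (γ * F y hyf (W₀ ω') + f (G y (W₀ ω'))))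
        / ∫ ω', Real.exp (γ * F y hyf (W₀ ω') + g (G y (W₀ ω'))) := by
    have h' : ∫ z, Real.exp (f z - g z) ∂(Measure.map (fun ω' => G y (W₀ ω'))
          (Measure.tilted ℙ fun ω' => γ * F y hyf (W₀ ω') + g (G y (W₀ ω'))))
        = (∫ ω', Real.exp (γ * F y hyf (W₀ ω') + g (G y (W₀ ω'))
            + (f (G y (W₀ ω')) - g (G y (W₀ ω')))))
          / ∫ ω', Real.exp (γ * F y hyf (W₀ ω') + g (G y (W₀ ω'))) :=
      aux_exp_integral _ (hTm y) _ (hψm y hyf g hgc) (fun z => f z - g z)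
        (hfc.sub hgc).measurable
    rw [hrep₂, h', hnum₂]
  have hIE₁ : Integrable (fun z => Real.exp (g z - f z)) Q₁ := by
    have hprod : Integrable (fun ω' => Real.exp (γ * F x hxg (W₀ ω') + f (G x (W₀ ω'))
        + (g (G x (W₀ ω')) - f (G x (W₀ ω'))))) ℙ := by
      rw [hnum₁]
      exact hIgx
    rw [hrep₁]
    exact aux_exp_integrable _ (hTm x) _ (hψm x hxg f hfc) hIfx _
      (hgc.sub hfc).measurable hprod
  have hIE₂ : Integrable (fun z => Real.exp (f z - g z)) Q₂ := by
    have hprod : Integrable (fun ω' => Real.exp (γ * F y hyf (W₀ ω') + g (G y (W₀ ω'))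
        + (f (G y (W₀ ω')) - g (G y (W₀ ω'))))) ℙ := by
      rw [hnum₂]
      exact hIfy
    rw [hrep₂]
    exact aux_exp_integrable _ (hTm y) _ (hψm y hyf g hgc) hIgy _
      (hfc.sub hgc).measurable hprod
  -- Jensen's inequality
  have hGF₁ : Integrable (fun z => g z - f z) Q₁ := by
    refine hI₁.neg.congr (Filter.Eventually.of_forall fun z => ?_)
    simp
  have hJ₁ := aux_jensen_exp Q₁ (fun z => g z - f z) hGF₁ hIE₁
  rw [hE₁, Real.log_div hZgx.ne' hZfx.ne'] at hJ₁
  have hintneg₁ : ∫ z, (g z - f z) ∂Q₁ = - ∫ z, (f z - g z) ∂Q₁ := by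
    rw [← integral_neg]
    exact integral_congr_ae (Filter.Eventually.of_forall fun z => by ring)
  rw [hintneg₁] at hJ₁
  have hJ₂ := aux_jensen_exp Q₂ (fun z => f z - g z) hI₂ hIE₂
  rw [hE₂, Real.log_div hZfy.ne' hZgy.ne'] at hJ₂
  -- lower boundedness of the Bellman infimum
  have hA₁ : AEMeasurable (fun ω' => a₁ (W₀ ω')) ℙ := by
    have h := (hmom 1).1.aemeasurable
    refine (Real.measurable_log.comp_aemeasurable h).congr
      (Filter.Eventually.of_forall fun ω' => ?_)
    simp [Real.log_exp]
  have hA₂ : AEMeasurable (fun ω' => a₂ (W₀ ω')) ℙ := by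
    have h := (hmom 1).2.aemeasurable
    refine (Real.measurable_log.comp_aemeasurable h).congr
      (Filter.Eventually.of_forall fun ω' => ?_)
    simp [Real.log_exp]
  have hbdd : ∀ (x' : Fin k → ℝ) (φ : (Fin k → ℝ) → ℝ) (hφc : Continuous φ) (Cφ : ℝ),
      0 ≤ Cφ → (∀ z, |φ z| ≤ Cφ * (1 + ω z)) →
      BddBelow ((fun h => Real.log
        (∫ ω', Real.exp (γ * F x' h (W₀ ω') + φ (G x' (W₀ ω'))))) '' U) := by
    intro x' φ hφc Cφ hCφ hφb
    refine aux_bddBelow U (fun h ω' => γ * F x' h (W₀ ω') + φ (G x' (W₀ ω')))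
      (fun ω' => -(|γ| * a₂ (W₀ ω') + |γ| * (b₂ * ω x'))
        - (Cφ * a₁ (W₀ ω') + Cφ * (1 + b₁ * ω x')))
      ?_ ?_ ?_ (fun h _ => keyInt x' h φ hφc Cφ hCφ hφb)
    · exact (Real.measurable_exp.comp_aemeasurable
        (((hA₂.const_mul |γ|).add_const _).neg.sub
          ((hA₁.const_mul Cφ).add_const _))).aestronglyMeasurable
    · intro h hh ω'
      beta_reduce
      have h1 : -(|γ| * a₂ (W₀ ω') + |γ| * (b₂ * ω x')) ≤ γ * F x' h (W₀ ω') := by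
        have h3 := neg_abs_le (γ * F x' h (W₀ ω'))
        rw [abs_mul] at h3
        have h2 := mul_le_mul_of_nonneg_left (hFd x' h (W₀ ω')) (abs_nonneg γ)
        nlinarith
      have h2 : -(Cφ * a₁ (W₀ ω') + Cφ * (1 + b₁ * ω x')) ≤ φ (G x' (W₀ ω')) := by
        have h3 := neg_abs_le (φ (G x' (W₀ ω')))
        have h4 := hφb (G x' (W₀ ω'))
        have h5 : Cφ * (1 + ω (G x' (W₀ ω'))) ≤ Cφ * (1 + (a₁ (W₀ ω') + b₁ * ω x')) :=
          mul_le_mul_of_nonneg_left (by linarith [hGd x' (W₀ ω')]) hCφ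
        nlinarith
      linarith
    · intro ω'
      beta_reduce
      have h1 := mul_nonneg (abs_nonneg γ) (ha₂ (W₀ ω'))
      have h2 := mul_nonneg hCφ (ha₁ (W₀ ω'))
      have h3 := mul_nonneg (abs_nonneg γ) (mul_nonneg hb₂.le (hω0 x'))
      have h4 : (0:ℝ) ≤ Cφ * (1 + b₁ * ω x') :=
        mul_nonneg hCφ (by nlinarith [mul_nonneg hb₁.le (hω0 x')])
      linarith
  have hTfx : bellmanT γ U W₀ G F f x
      ≤ Real.log (∫ ω', Real.exp (γ * F x hxg (W₀ ω') + f (G x (W₀ ω')))) :=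
    csInf_le (hbdd x f hfc Cf hCf0 hCf) ⟨hxg, hxgU, rfl⟩
  have hTgy : bellmanT γ U W₀ G F g y
      ≤ Real.log (∫ ω', Real.exp (γ * F y hyf (W₀ ω') + g (G y (W₀ ω')))) :=
    csInf_le (hbdd y g hgc Cg hCg0 hCg) ⟨hyf, hyfU, rfl⟩
  constructor
  · linarith [hJ₁, hJ₂, hTfx, hTgy, hmin1, hmin2]
  -- second part: span bound
  · set φ : (Fin k → ℝ) → ℝ := fun z => f z - g z with hφdef
    have hφb : ∀ z, |φ z| ≤ (Cf + Cg) * (1 + ω z) := fun z => by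
      have h0 : φ z = f z - g z := by rw [hφdef]
      have h1 : |φ z| ≤ |f z| + |g z| := by rw [h0]; exact abs_sub (f z) (g z)
      have h2 : (Cf + Cg) * (1 + ω z) = Cf * (1 + ω z) + Cg * (1 + ω z) := by ring
      linarith [hCf z, hCg z]
    have hM : ∀ z, 1 + ω z ≤ max 1 β⁻¹ * (1 + β * ω z) := fun z => by
      have h1 : (1:ℝ) ≤ max 1 β⁻¹ := le_max_left _ _
      have h3 : (1:ℝ) ≤ max 1 β⁻¹ * β := by
        calc (1:ℝ) = β⁻¹ * β := (inv_mul_cancel₀ hβ.ne').symm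
        _ ≤ _ := mul_le_mul_of_nonneg_right (le_max_right _ _) hβ.le
      have h4 : max 1 β⁻¹ * (1 + β * ω z) = max 1 β⁻¹ + max 1 β⁻¹ * β * ω z := by ring
      have h5 := mul_le_mul_of_nonneg_right h3 (hω0 z)
      linarith [hω0 z]
    have hden : ∀ p : (Fin k → ℝ) × (Fin k → ℝ), (0:ℝ) < 2 + β * ω p.1 + β * ω p.2 :=
      fun p => by linarith [mul_nonneg hβ.le (hω0 p.1), mul_nonneg hβ.le (hω0 p.2)]
    have hBdd : BddAbove (Set.range fun p : (Fin k → ℝ) × (Fin k → ℝ) =>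
        (φ p.1 - φ p.2) / (2 + β * ω p.1 + β * ω p.2)) := by
      refine ⟨(Cf + Cg) * max 1 β⁻¹, ?_⟩
      rintro v ⟨p, rfl⟩
      rw [div_le_iff₀ (hden p)]
      have hCfg : (0:ℝ) ≤ Cf + Cg := by linarith
      have h5 : φ p.1 - φ p.2 ≤ (Cf + Cg) * (1 + ω p.1) + (Cf + Cg) * (1 + ω p.2) := by
        linarith [le_abs_self (φ p.1), neg_abs_le (φ p.2), hφb p.1, hφb p.2]
      have h6 := mul_le_mul_of_nonneg_left (hM p.1) hCfg
      have h7 := mul_le_mul_of_nonneg_left (hM p.2) hCfg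
      have h8 : (Cf + Cg) * (max 1 β⁻¹ * (1 + β * ω p.1))
          + (Cf + Cg) * (max 1 β⁻¹ * (1 + β * ω p.2))
          = (Cf + Cg) * max 1 β⁻¹ * (2 + β * ω p.1 + β * ω p.2) := by ring
      exact le_trans h5 (le_trans (add_le_add h6 h7) (le_of_eq h8))
    have hwd : wspanb β ω φ = ⨆ p : (Fin k → ℝ) × (Fin k → ℝ),
        (φ p.1 - φ p.2) / (2 + β * ω p.1 + β * ω p.2) := rfl
    have hspan : ∀ z₁ z₂, φ z₁ - φ z₂ ≤ wspanb β ω φ * (2 + β * ω z₁ + β * ω z₂) :=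
      fun z₁ z₂ => by
        have h := le_ciSup hBdd (z₁, z₂)
        rw [hwd]
        exact (div_le_iff₀ (hden (z₁, z₂))).1 h
    have hs0 : 0 ≤ wspanb β ω φ := by
      have h := le_ciSup hBdd (x, x)
      rw [hwd]
      simpa using h
    set s := wspanb β ω φ with hsdef
    have hcb : BddAbove (Set.range fun z => φ z - s * (1 + β * ω z)) := by
      refine ⟨φ x + s * (1 + β * ω x), ?_⟩
      rintro v ⟨z, rfl⟩
      beta_reduce
      have h := hspan z x
      have he : s * (2 + β * ω z + β * ω x) = s * (1 + β * ω z) + s * (1 + β * ω x) := by ring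
      linarith
    set c := ⨆ z, (φ z - s * (1 + β * ω z)) with hcdef
    have hc1 : ∀ z, φ z - s * (1 + β * ω z) ≤ c := fun z => le_ciSup hcb z
    have hc2 : ∀ z, c ≤ φ z + s * (1 + β * ω z) := fun z => ciSup_le fun z' => by
      beta_reduce
      have h := hspan z' z
      have he : s * (2 + β * ω z' + β * ω z) = s * (1 + β * ω z') + s * (1 + β * ω z) := by ring
      linarith
    have habs : ∀ z, |φ z - c| ≤ s * (1 + β * ω z) := fun z =>
      abs_le.2 ⟨by linarith [hc2 z], by linarith [hc1 z]⟩
    exact aux_part2 Q₁ Q₂ φ (fun z => 1 + β * ω z) (hfc.sub hgc).stronglyMeasurable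
      s c habs hI₁ hI₂ hIvar
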